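/- Given an optimal solution S* = ((r_1, d_1), ..., (r_s, d_s)) for the FSTSP in which each operation's truck path r_ℓ visits distinct nodes, consecutive operations share endpoints (the last node of r_ℓ equals the first node of r_{ℓ+1}), each customer is visited exactly once (either as a truck node in some r_ℓ or as the drone node of some d_ℓ), and the tour starts and ends at the depot, there exists a Hamiltonian cycle h over all nodes N such that S* respects h: the nodes visited by the truck appear in h in the same order, and each drone node appears in h strictly between its launch node and its rendezvous node. -/

import Mathlib

/-- The truck route of a solution: concatenate the truck paths of its operations,
dropping the repeated shared endpoint at each junction. -/
def chainFlatten : List (List ℕ) → List ℕ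
  | [] => []
  | r :: rest => r ++ (rest.map List.tail).flatten

namespace FSTSPAux

/-- Insert the drone node (if any) right after the first truck node. -/
def gOp (o : List ℕ × Option ℕ) : List ℕ :=
  match o.2, o.1 with
  | none, r => r
  | some _, [] => []
  | some j, u :: rest => u :: j :: rest

lemma shape (o : List ℕ × Option ℕ) (h : 2 ≤ o.1.length) :
    ∃ u v r, o.1 = u :: v :: r := by
  match hm : o.1 with
  | [] => simp [hm] at h
  | [u] => simp [hm] at h
  | u :: v :: r => exact ⟨u, v, r, rfl⟩

lemma gOp_some (o : List ℕ × Option ℕ) (j : ℕ) (h2 : o.2 = some j)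
    (u : ℕ) (t : List ℕ) (h1 : o.1 = u :: t) : gOp o = u :: j :: t := by
  simp [gOp, h2, h1]

lemma gOp_none (o : List ℕ × Option ℕ) (h2 : o.2 = none) : gOp o = o.1 := by
  simp [gOp, h2]

lemma gOp_head? (o : List ℕ × Option ℕ) (h : 2 ≤ o.1.length) :
    (gOp o).head? = o.1.head? := by
  obtain ⟨u, v, r, hm⟩ := shape o h
  cases h2 : o.2 with
  | none => rw [gOp_none o h2]
  | some j => rw [gOp_some o j h2 u (v :: r) hm, hm]; rfl

lemma gOp_getLast? (o : List ℕ × Option ℕ) (h : 2 ≤ o.1.length) :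
    (gOp o).getLast? = o.1.getLast? := by
  obtain ⟨u, v, r, hm⟩ := shape o h
  cases h2 : o.2 with
  | none => rw [gOp_none o h2]
  | some j =>
    rw [gOp_some o j h2 u (v :: r) hm, hm]
    simp only [List.getLast?_cons_cons]

lemma gOp_ne_nil (o : List ℕ × Option ℕ) (h : 2 ≤ o.1.length) : gOp o ≠ [] := by
  obtain ⟨u, v, r, hm⟩ := shape o h
  cases h2 : o.2 with
  | none => rw [gOp_none o h2, hm]; simp
  | some j => rw [gOp_some o j h2 u (v :: r) hm]; simp

lemma gOp_sublist (o : List ℕ × Option ℕ) (h : 2 ≤ o.1.length) :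
    o.1.Sublist (gOp o) := by
  obtain ⟨u, v, r, hm⟩ := shape o h
  cases h2 : o.2 with
  | none => rw [gOp_none o h2]
  | some j =>
    rw [gOp_some o j h2 u (v :: r) hm, hm]
    exact List.Sublist.cons₂ u (List.Sublist.cons j (List.Sublist.refl _))

lemma gOp_dropLast_sublist (o : List ℕ × Option ℕ) (h : 2 ≤ o.1.length) :
    o.1.dropLast.Sublist (gOp o).dropLast := by
  obtain ⟨u, v, r, hm⟩ := shape o h
  cases h2 : o.2 with
  | none => rw [gOp_none o h2]
  | some j =>
    rw [gOp_some o j h2 u (v :: r) hm, hm, List.dropLast_cons₂,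
      List.dropLast_cons₂]
    exact List.Sublist.cons₂ u (List.Sublist.cons j (List.Sublist.refl _))

lemma gOp_perm (o : List ℕ × Option ℕ) (h : 2 ≤ o.1.length) :
    (gOp o).Perm (o.1 ++ o.2.toList) := by
  obtain ⟨u, v, r, hm⟩ := shape o h
  cases h2 : o.2 with
  | none => rw [gOp_none o h2]; simp
  | some j =>
    rw [gOp_some o j h2 u (v :: r) hm, hm]
    exact List.Perm.cons u (List.perm_append_singleton j (v :: r)).symm

lemma gOp_dropLast_perm (o : List ℕ × Option ℕ) (h : 2 ≤ o.1.length) :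
    (gOp o).dropLast.Perm (o.1.dropLast ++ o.2.toList) := by
  obtain ⟨u, v, r, hm⟩ := shape o h
  cases h2 : o.2 with
  | none => rw [gOp_none o h2]; simp
  | some j =>
    rw [gOp_some o j h2 u (v :: r) hm, hm, List.dropLast_cons₂,
      List.dropLast_cons₂]
    exact List.Perm.cons u (List.perm_append_singleton j _).symm

lemma chainFlatten_cons (a : List ℕ) (rest : List (List ℕ)) :
    chainFlatten (a :: rest) = a ++ (rest.map List.tail).flatten := rfl

lemma chainFlatten_ne_nil (a : List ℕ) (rest : List (List ℕ)) (ha : a ≠ []) :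
    chainFlatten (a :: rest) ≠ [] := by
  rw [chainFlatten_cons]
  simp [ha]

lemma chainFlatten_head? (a : List ℕ) (rest : List (List ℕ)) (ha : a ≠ []) :
    (chainFlatten (a :: rest)).head? = a.head? := by
  rw [chainFlatten_cons, List.head?_append_of_ne_nil _ ha]

lemma chainFlatten_cons_cons (a b : List ℕ) (rest : List (List ℕ))
    (ha : a ≠ []) (hab : a.getLast? = b.head?) :
    chainFlatten (a :: b :: rest) = a.dropLast ++ chainFlatten (b :: rest) := by
  have hb : b ≠ [] := by
    rintro rfl
    rw [List.head?_nil, List.getLast?_eq_none_iff] at hab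
    exact ha hab
  obtain ⟨x, t, rfl⟩ : ∃ x t, b = x :: t := by
    cases b with
    | nil => exact absurd rfl hb
    | cons x t => exact ⟨x, t, rfl⟩
  have hlast : a.getLast ha = x := by
    rw [← Option.some_inj, ← List.getLast?_eq_getLast (l := a) ha, hab, List.head?_cons]
  rw [chainFlatten_cons, chainFlatten_cons]
  conv_lhs => rw [← List.dropLast_append_getLast ha]
  rw [hlast]
  simp [List.append_assoc]

/-- The chain relation. -/
abbrev Rel (o o' : List ℕ × Option ℕ) : Prop := o.1.getLast? = o'.1.head?

lemma perm_main : ∀ S : List (List ℕ × Option ℕ),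
    (∀ o ∈ S, 2 ≤ o.1.length) → List.Chain' Rel S →
    (chainFlatten (S.map gOp)).Perm
      (chainFlatten (S.map Prod.fst) ++ S.filterMap Prod.snd)
  | [], _, _ => by simp [chainFlatten]
  | [a], hlen, _ => by
    have h2 := hlen a (by simp)
    have := gOp_perm a h2
    cases hh : a.2 <;> simp_all [chainFlatten, List.filterMap_cons]
  | a :: b :: rest, hlen, hchain => by
    have h2a := hlen a (by simp)
    have h2b := hlen b (by simp)
    have hab : Rel a b := (List.isChain_cons_cons.mp hchain).1
    have ih := perm_main (b :: rest) (fun o ho => hlen o (by simp [ho]))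
      (List.isChain_cons_cons.mp hchain).2
    simp only [List.map_cons] at ih ⊢
    rw [chainFlatten_cons_cons (gOp a) (gOp b) _ (gOp_ne_nil a h2a)
        (by rw [gOp_getLast? a h2a, gOp_head? b h2b]; exact hab),
      chainFlatten_cons_cons a.1 b.1 _
        (by intro hnil; rw [hnil] at h2a; simp at h2a) hab]
    have key := (gOp_dropLast_perm a h2a).append ih
    refine key.trans ?_
    have hfm : (a :: b :: rest).filterMap Prod.snd =
        a.2.toList ++ (b :: rest).filterMap Prod.snd := by
      cases h2 : a.2 <;> simp [List.filterMap_cons, h2]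
    rw [hfm]
    -- (x ++ j) ++ (y ++ z) ~ (x ++ y) ++ (j ++ z)
    simp only [List.append_assoc]
    exact List.Perm.append_left _ (List.perm_append_comm_assoc _ _ _)

lemma sublist_main : ∀ S : List (List ℕ × Option ℕ),
    (∀ o ∈ S, 2 ≤ o.1.length) → List.Chain' Rel S →
    (chainFlatten (S.map Prod.fst)).Sublist (chainFlatten (S.map gOp))
  | [], _, _ => by simp [chainFlatten]
  | [a], hlen, _ => by
    have h2 := hlen a (by simp)
    simpa [chainFlatten] using gOp_sublist a h2
  | a :: b :: rest, hlen, hchain => by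
    have h2a := hlen a (by simp)
    have h2b := hlen b (by simp)
    have hab : Rel a b := (List.isChain_cons_cons.mp hchain).1
    have ih := sublist_main (b :: rest) (fun o ho => hlen o (by simp [ho]))
      (List.isChain_cons_cons.mp hchain).2
    simp only [List.map_cons] at ih ⊢
    rw [chainFlatten_cons_cons (gOp a) (gOp b) _ (gOp_ne_nil a h2a)
        (by rw [gOp_getLast? a h2a, gOp_head? b h2b]; exact hab),
      chainFlatten_cons_cons a.1 b.1 _
        (by intro hnil; rw [hnil] at h2a; simp at h2a) hab]
    exact (gOp_dropLast_sublist a h2a).append ih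

lemma getLast_main : ∀ S : List (List ℕ × Option ℕ),
    (∀ o ∈ S, 2 ≤ o.1.length) → List.Chain' Rel S →
    (chainFlatten (S.map gOp)).getLast? = (chainFlatten (S.map Prod.fst)).getLast?
  | [], _, _ => by simp [chainFlatten]
  | [a], hlen, _ => by
    have h2 := hlen a (by simp)
    simpa [chainFlatten] using gOp_getLast? a h2
  | a :: b :: rest, hlen, hchain => by
    have h2a := hlen a (by simp)
    have h2b := hlen b (by simp)
    have hab : Rel a b := (List.isChain_cons_cons.mp hchain).1
    have ih := getLast_main (b :: rest) (fun o ho => hlen o (by simp [ho]))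
      (List.isChain_cons_cons.mp hchain).2
    simp only [List.map_cons] at ih ⊢
    rw [chainFlatten_cons_cons (gOp a) (gOp b) _ (gOp_ne_nil a h2a)
        (by rw [gOp_getLast? a h2a, gOp_head? b h2b]; exact hab),
      chainFlatten_cons_cons a.1 b.1 _
        (by intro hnil; rw [hnil] at h2a; simp at h2a) hab,
      List.getLast?_append_of_ne_nil _
        (chainFlatten_ne_nil (gOp b) _ (gOp_ne_nil b h2b)),
      List.getLast?_append_of_ne_nil _
        (chainFlatten_ne_nil b.1 _
          (by intro hnil; rw [hnil] at h2b; simp at h2b))]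
    exact ih

lemma contig_main : ∀ S : List (List ℕ × Option ℕ),
    (∀ o ∈ S, 2 ≤ o.1.length) → List.Chain' Rel S →
    ∀ o ∈ S, ∃ p q, chainFlatten (S.map gOp) = p ++ gOp o ++ q
  | [], _, _, o, ho => by simp at ho
  | a :: rest, hlen, hchain, o, ho => by
    rcases List.mem_cons.mp ho with rfl | ho'
    · exact ⟨[], ((rest.map gOp).map List.tail).flatten, by
        rw [List.map_cons, chainFlatten_cons]; simp⟩
    · obtain ⟨b, rest', rfl⟩ : ∃ b rest', rest = b :: rest' := by
        cases rest with
        | nil => simp at ho'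
        | cons b rest' => exact ⟨b, rest', rfl⟩
      have h2a := hlen a (by simp)
      have h2b := hlen b (by simp)
      have hab : Rel a b := (List.isChain_cons_cons.mp hchain).1
      obtain ⟨p, q, hpq⟩ := contig_main (b :: rest')
        (fun o' ho'' => hlen o' (by simp [List.mem_cons.mp ho'']))
        (List.isChain_cons_cons.mp hchain).2 o ho'
      refine ⟨(gOp a).dropLast ++ p, q, ?_⟩
      simp only [List.map_cons] at hpq ⊢
      rw [chainFlatten_cons_cons (gOp a) (gOp b) _ (gOp_ne_nil a h2a)
          (by rw [gOp_getLast? a h2a, gOp_head? b h2b]; exact hab)]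
      rw [hpq]
      simp [List.append_assoc]

end FSTSPAux

open FSTSPAux in
/-- Given an optimal (indeed, any) solution `S` for the FSTSP in which each truck
path visits distinct nodes, consecutive operations share endpoints, each customer is
visited exactly once, and the tour starts at the depot `0` and ends at the depot
copy `n+1`, there is a Hamiltonian cycle `h` over `N = {0, …, n+1}` that `S`
respects: the truck nodes occur in `h` in the same order, and each drone node lies
in `h` strictly between its launch and rendezvous nodes. -/
theorem exists_hamiltonian_cycle_respected (n : ℕ) (S : List (List ℕ × Option ℕ))
    (hne : S ≠ [])
    (hlen : ∀ o ∈ S, 2 ≤ o.1.length)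
    (hdistinct : ∀ o ∈ S, o.1.Nodup)
    (hchain : List.Chain' (fun o o' : List ℕ × Option ℕ => o.1.getLast? = o'.1.head?) S)
    (hstart : (chainFlatten (S.map Prod.fst)).head? = some 0)
    (hend : (chainFlatten (S.map Prod.fst)).getLast? = some (n + 1))
    (hdrone : ∀ o ∈ S, ∀ j, o.2 = some j → 1 ≤ j ∧ j ≤ n)
    (hcover : ∀ x, x ∈ chainFlatten (S.map Prod.fst) ++ S.filterMap Prod.snd ↔ x < n + 2)
    (honce : (chainFlatten (S.map Prod.fst) ++ S.filterMap Prod.snd).Nodup) :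
    ∃ h : List ℕ,
      h.head? = some 0 ∧ h.getLast? = some (n + 1) ∧ h.Nodup ∧
      (∀ x, x ∈ h ↔ x < n + 2) ∧
      (chainFlatten (S.map Prod.fst)).Sublist h ∧
      ∀ o ∈ S, ∀ j, o.2 = some j → ∀ u w, o.1.head? = some u → o.1.getLast? = some w →
        h.idxOf u < h.idxOf j ∧ h.idxOf j < h.idxOf w := by
  refine ⟨chainFlatten (S.map gOp), ?_, ?_, ?_, ?_, ?_, ?_⟩
  case _ =>
    -- head?
    obtain ⟨a, rest, rfl⟩ : ∃ a rest, S = a :: rest := by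
      cases S with
      | nil => exact absurd rfl hne
      | cons a rest => exact ⟨a, rest, rfl⟩
    have h2a := hlen a (by simp)
    have ha : a.1 ≠ [] := by intro hnil; rw [hnil] at h2a; simp at h2a
    rw [List.map_cons, chainFlatten_head? _ _ (gOp_ne_nil a h2a), gOp_head? a h2a]
    rw [List.map_cons, chainFlatten_head? _ _ ha] at hstart
    exact hstart
  case _ =>
    rw [getLast_main S hlen hchain]
    exact hend
  case _ =>
    exact (perm_main S hlen hchain).nodup_iff.mpr honce
  case _ =>
    intro x
    rw [(perm_main S hlen hchain).mem_iff]
    exact hcover x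
  case _ =>
    exact sublist_main S hlen hchain
  case _ =>
    intro o ho j hj u w hu hw
    have hnd : (chainFlatten (S.map gOp)).Nodup :=
      (perm_main S hlen hchain).nodup_iff.mpr honce
    have h2 := hlen o ho
    obtain ⟨u', v, r, hm⟩ := shape o h2
    have huu : u = u' := by rw [hm] at hu; simpa using hu.symm
    subst huu
    set t := v :: r with ht
    have hwt : t.getLast? = some w := by
      rw [hm, ht, List.getLast?_cons_cons] at hw; exact hw
    have hwmem : w ∈ t := by
      have := List.mem_of_mem_getLast? (l := t) (a := w) hwt
      exact this
    have hg : gOp o = u :: j :: t := gOp_some o j hj u t hm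
    obtain ⟨p, q, hpq⟩ := contig_main S hlen hchain o ho
    rw [hg] at hpq
    -- h = p ++ (u :: j :: t) ++ q = p ++ (u :: j :: (t ++ q))
    have hpq' : chainFlatten (S.map gOp) = p ++ (u :: j :: (t ++ q)) := by
      rw [hpq]; simp
    rw [hpq'] at hnd ⊢
    have hnd2 := List.nodup_append'.mp hnd
    have hdisj := hnd2.2.2
    have hX := hnd2.2.1
    -- u ∉ p, j ∉ p, w ∉ p
    have hup : u ∉ p := fun hmem => hdisj hmem (by simp)
    have hjp : j ∉ p := fun hmem => hdisj hmem (by simp)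
    have hwp : w ∉ p := fun hmem => hdisj hmem (by
      simp only [List.mem_cons, List.mem_append]
      exact Or.inr (Or.inr (Or.inl hwmem)))
    have huj : u ≠ j := by
      have := (List.nodup_cons.mp hX).1
      intro hh; exact this (by rw [hh]; simp)
    have hjw : j ≠ w := by
      have hX2 := (List.nodup_cons.mp hX).2
      have := (List.nodup_cons.mp hX2).1
      intro hh; rw [hh] at this
      exact this (List.mem_append.mpr (Or.inl hwmem))
    have huw : u ≠ w := by
      have hnod := hdistinct o ho
      rw [hm] at hnod
      have := (List.nodup_cons.mp hnod).1
      intro hh; rw [hh] at this; exact this hwmem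
    rw [List.idxOf_append_of_notMem hup, List.idxOf_append_of_notMem hjp,
      List.idxOf_append_of_notMem hwp]
    rw [List.idxOf_cons_self]
    rw [List.idxOf_cons_ne _ huj, List.idxOf_cons_self]
    rw [List.idxOf_cons_ne _ huw, List.idxOf_cons_ne _ hjw]
    omega
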